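/- (Dual chain rule.) Let f, g : ℝ → ℝ be differentiable on ℝ, let deriv g be differentiable at x₁, let deriv f be differentiable at g x₁, and let x₂ ∈ ℝ. Then in DualNumber ℝ: deriv (f ∘ g) x₁ + ε x₂ · deriv (deriv (f ∘ g)) x₁ = (deriv f (g x₁) + ε x₂ · deriv g x₁ · deriv (deriv f) (g x₁)) · (deriv g x₁ + ε x₂ · deriv (deriv g) x₁). -/
import Mathlib
set_option maxRecDepth 4000


open TrivSqZeroExt
open scoped DualNumber

/-- The dual chain rule. -/
theorem dual_deriv_comp (f g : ℝ → ℝ) (x₁ x₂ : ℝ)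
    (hf : Differentiable ℝ f) (hg : Differentiable ℝ g)
    (hg' : DifferentiableAt ℝ (deriv g) x₁) (hf' : DifferentiableAt ℝ (deriv f) (g x₁)) :
    ((inl (deriv (f ∘ g) x₁) + (x₂ * deriv (deriv (f ∘ g)) x₁) • ε) : DualNumber ℝ) =
      (inl (deriv f (g x₁)) + (x₂ * deriv g x₁ * deriv (deriv f) (g x₁)) • ε) *
        (inl (deriv g x₁) + (x₂ * deriv (deriv g) x₁) • ε) := by
  have h1 : deriv (f ∘ g) = fun x => deriv f (g x) * deriv g x := by
    funext x
    exact deriv_comp x (hf (g x)) (hg x)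
  have hfg : DifferentiableAt ℝ (fun x => deriv f (g x)) x₁ := hf'.comp x₁ (hg x₁)
  have h2 : deriv (deriv (f ∘ g)) x₁ =
      deriv (fun x => deriv f (g x)) x₁ * deriv g x₁ +
        deriv f (g x₁) * deriv (deriv g) x₁ := by
    rw [h1]
    exact deriv_mul hfg hg'
  have h3 : deriv (fun x => deriv f (g x)) x₁ = deriv (deriv f) (g x₁) * deriv g x₁ :=
    deriv_comp x₁ hf' (hg x₁)
  have h4 : deriv (f ∘ g) x₁ = deriv f (g x₁) * deriv g x₁ := by rw [h1]
  ext
  · simp [h4]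
  · rw [snd_add, snd_mul]
    simp only [snd_add, fst_add, snd_inl, fst_inl, snd_smul, fst_smul, DualNumber.eps,
      snd_inr, fst_inr, smul_eq_mul, smul_zero, mul_zero, zero_add, add_zero, mul_one,
      op_smul_eq_smul]
    rw [h2, h3]
    ring
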